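/- Let k ≠ 0 be real and let q : ℝ → ℝ³ be a twice-differentiable curve with q̈(t) = 2k q(t) for all t (the system with potential V = −k‖q‖²). Then for every pair of indices i, j ∈ Fin 3, the function B_{ij}(t) = q̇_i(t) q̇_j(t) − 2k q_i(t) q_j(t) is constant. -/

import Mathlib

theorem jauchHillFradkin_conserved (k : ℝ) (hk : k ≠ 0)
    (q q' q'' : ℝ → Fin 3 → ℝ)
    (hq : ∀ t, HasDerivAt q (q' t) t) (hq' : ∀ t, HasDerivAt q' (q'' t) t)
    (heq : ∀ t, q'' t = (2 * k) • q t) :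
    ∀ (i j : Fin 3) (t₁ t₂ : ℝ),
      q' t₁ i * q' t₁ j - 2 * k * q t₁ i * q t₁ j
        = q' t₂ i * q' t₂ j - 2 * k * q t₂ i * q t₂ j := by
  intro i j t₁ t₂
  have hqc : ∀ (m : Fin 3) t, HasDerivAt (fun s => q s m) (q' t m) t := fun m t =>
    (hasDerivAt_pi.mp (hq t)) m
  have hqc' : ∀ (m : Fin 3) t, HasDerivAt (fun s => q' s m) (q'' t m) t := fun m t =>
    (hasDerivAt_pi.mp (hq' t)) m
  have key : ∀ t : ℝ, HasDerivAt
      (fun s => q' s i * q' s j - 2 * k * q s i * q s j) 0 t := by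
    intro t
    have h := (((hqc' i t).mul (hqc' j t)).sub
      (((hasDerivAt_const t (2 * k)).mul (hqc i t)).mul (hqc j t)))
    refine h.congr_deriv ?_
    have hi := congrFun (heq t) i
    have hj := congrFun (heq t) j
    simp only [Pi.smul_apply, smul_eq_mul] at hi hj
    rw [hi, hj]; simp only [Pi.mul_apply]; ring
  have : ∀ a b : ℝ, (fun s => q' s i * q' s j - 2 * k * q s i * q s j) a =
      (fun s => q' s i * q' s j - 2 * k * q s i * q s j) b := by
    intro a b
    exact is_const_of_deriv_eq_zero (fun x => (key x).differentiableAt)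
      (fun x => (key x).deriv) a b
  exact this t₁ t₂
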